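/- In the wreath product Z ≀ Z = (⊕_{h∈Z} Z) ⋊ Z, with γ the generator of the acting copy of Z and σ the generator of the copy of Z at position 0 in the direct sum, the element e_i = γ^i σ γ^{-i} has word length 2i+1 (for i ≥ 1) with respect to the generating set {γ^{±1}, σ^{±1}}. -/

import Mathlib

open Multiplicative

noncomputable section

def shiftAut (n : ℤ) : MulAut (Multiplicative (ℤ →₀ ℤ)) :=
  AddEquiv.toMultiplicative (Finsupp.domCongr (Equiv.addLeft n))

def shiftHom : Multiplicative ℤ →* MulAut (Multiplicative (ℤ →₀ ℤ)) where
  toFun n := shiftAut n.toAdd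
  map_one' := by
    ext f : 1
    show ofAdd (Finsupp.equivMapDomain (Equiv.addLeft ((1 : Multiplicative ℤ).toAdd)) f.toAdd) = f
    have : Equiv.addLeft ((1 : Multiplicative ℤ).toAdd) = Equiv.refl ℤ := by ext x; simp
    rw [this, Finsupp.equivMapDomain_refl]
    rfl
  map_mul' m n := by
    ext f : 1
    show ofAdd (Finsupp.equivMapDomain (Equiv.addLeft ((m * n).toAdd)) f.toAdd) = _
    have : (Equiv.addLeft ((m * n).toAdd) : ℤ ≃ ℤ) =
        (Equiv.addLeft n.toAdd).trans (Equiv.addLeft m.toAdd) := by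
      ext x; simp [add_assoc]
    rw [this, Finsupp.equivMapDomain_trans]
    rfl

/-- The wreath product `ℤ ≀ ℤ = (⊕_{h∈ℤ} ℤ) ⋊ ℤ`, where `ℤ` acts by shifting
coordinates. -/
def ZwrZ := SemidirectProduct (Multiplicative (ℤ →₀ ℤ)) (Multiplicative ℤ) shiftHom

instance : Group ZwrZ := SemidirectProduct.instGroup

/-- `γ`, the generator of the acting copy of `ℤ`. -/
def γ : ZwrZ := SemidirectProduct.inr (ofAdd 1)

/-- `σ`, the generator of the copy of `ℤ` at position `0` in the direct sum. -/
def σ : ZwrZ := SemidirectProduct.inl (ofAdd (Finsupp.single 0 1))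

/-- `e i = γ^i σ γ^{-i}`. -/
def e (i : ℕ) : ZwrZ := γ ^ (i : ℤ) * σ * γ ^ (-(i : ℤ))


/-- The word length of `g` with respect to the (symmetric) alphabet `S`:
the least length of a list of elements of `S` with product `g`. -/
def wordLength {G : Type*} [Group G] (S : Set G) (g : G) : ℕ :=
  sInf {n | ∃ l : List G, (∀ x ∈ l, x ∈ S) ∧ l.length = n ∧ l.prod = g}


-- Auxiliary machinery -------------------------------------------------------

/-- The γ-exponent of an element. -/
def Aexp (g : ZwrZ) : ℤ := (SemidirectProduct.right g).toAdd

/-- The lamp configuration of an element. -/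
def Fcf (g : ZwrZ) : ℤ →₀ ℤ := (SemidirectProduct.left g).toAdd

lemma Aexp_mul (g h : ZwrZ) : Aexp (g * h) = Aexp g + Aexp h := rfl
lemma Fcf_mul (g h : ZwrZ) (t : ℤ) : Fcf (g * h) t = Fcf g t + Fcf h (-(Aexp g) + t) := rfl
lemma Aexp_one : Aexp 1 = 0 := rfl
lemma Fcf_one : Fcf 1 = 0 := rfl
lemma Aexp_γ : Aexp γ = 1 := rfl
lemma Fcf_γ : Fcf γ = 0 := rfl
lemma Aexp_γinv : Aexp γ⁻¹ = -1 := rfl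
lemma Fcf_γinv : Fcf γ⁻¹ = 0 := by
  show Finsupp.equivMapDomain _ (-0 : ℤ →₀ ℤ) = 0
  simp
lemma Aexp_σ : Aexp σ = 0 := rfl
lemma Fcf_σ : Fcf σ = Finsupp.single 0 1 := rfl
lemma Aexp_σinv : Aexp σ⁻¹ = 0 := rfl
lemma Fcf_σinv : Fcf σ⁻¹ = Finsupp.single 0 (-1) := by
  show Finsupp.equivMapDomain _ (-(Finsupp.single 0 1) : ℤ →₀ ℤ) = _
  ext t
  show -(Finsupp.single 0 1 : ℤ →₀ ℤ) (-0 + t) = _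
  simp [Finsupp.single_apply, eq_comm]

lemma mem_S {s : ZwrZ} (hs : s ∈ ({γ, γ⁻¹, σ, σ⁻¹} : Set ZwrZ)) :
    s = γ ∨ s = γ⁻¹ ∨ s = σ ∨ s = σ⁻¹ := by
  simpa [Set.mem_insert_iff] using hs

lemma Aexp_bound : ∀ l : List ZwrZ, (∀ x ∈ l, x ∈ ({γ, γ⁻¹, σ, σ⁻¹} : Set ZwrZ)) →
    (Aexp l.prod).natAbs ≤ l.length
  | [], _ => by simp [Aexp_one]
  | s :: l, h => by
    have ih := Aexp_bound l (fun x hx => h x (List.mem_cons_of_mem _ hx))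
    have hs := mem_S (h s List.mem_cons_self)
    rw [List.prod_cons, Aexp_mul, List.length_cons]
    rcases hs with rfl | rfl | rfl | rfl <;>
      simp only [Aexp_γ, Aexp_γinv, Aexp_σ, Aexp_σinv] <;> omega

lemma key_bound : ∀ l : List ZwrZ, (∀ x ∈ l, x ∈ ({γ, γ⁻¹, σ, σ⁻¹} : Set ZwrZ)) →
    ∀ t : ℤ, Fcf l.prod t ≠ 0 →
    t.natAbs + (t - Aexp l.prod).natAbs + 1 ≤ l.length
  | [], _, t, ht => by simp [Fcf_one] at ht
  | s :: l, h, t, ht => by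
    have hl : ∀ x ∈ l, x ∈ ({γ, γ⁻¹, σ, σ⁻¹} : Set ZwrZ) :=
      fun x hx => h x (List.mem_cons_of_mem _ hx)
    have hs := mem_S (h s List.mem_cons_self)
    rw [List.prod_cons] at ht ⊢
    rw [List.length_cons]
    rcases hs with rfl | rfl | rfl | rfl
    · rw [Fcf_mul, Fcf_γ, Aexp_γ] at ht
      simp only [Finsupp.coe_zero, Pi.zero_apply, zero_add] at ht
      have ih := key_bound l hl _ ht
      rw [Aexp_mul, Aexp_γ]
      omega
    · rw [Fcf_mul, Fcf_γinv, Aexp_γinv] at ht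
      simp only [Finsupp.coe_zero, Pi.zero_apply, zero_add] at ht
      have ih := key_bound l hl _ ht
      rw [Aexp_mul, Aexp_γinv]
      omega
    · rw [Fcf_mul, Fcf_σ, Aexp_σ, neg_zero, zero_add] at ht
      rw [Aexp_mul, Aexp_σ, zero_add]
      by_cases h0 : t = 0
      · subst h0
        have := Aexp_bound l hl
        omega
      · rw [Finsupp.single_apply, if_neg (by omega), zero_add] at ht
        have ih := key_bound l hl _ ht
        omega
    · rw [Fcf_mul, Fcf_σinv, Aexp_σinv, neg_zero, zero_add] at ht
      rw [Aexp_mul, Aexp_σinv, zero_add]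
      by_cases h0 : t = 0
      · subst h0
        have := Aexp_bound l hl
        omega
      · rw [Finsupp.single_apply, if_neg (by omega), zero_add] at ht
        have ih := key_bound l hl _ ht
        omega

lemma γ_zpow (n : ℤ) : γ ^ n = SemidirectProduct.inr (ofAdd n) := by
  show (SemidirectProduct.inr (ofAdd (1 : ℤ)) :
      SemidirectProduct (Multiplicative (ℤ →₀ ℤ)) (Multiplicative ℤ) shiftHom) ^ n = _
  rw [← map_zpow, ← ofAdd_zsmul, smul_eq_mul, mul_one]

lemma Aexp_γ_zpow (n : ℤ) : Aexp (γ ^ n) = n := by rw [γ_zpow]; rfl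

lemma Fcf_γ_zpow (n : ℤ) : Fcf (γ ^ n) = 0 := by rw [γ_zpow]; rfl

lemma Aexp_e (i : ℕ) : Aexp (e i) = 0 := by
  rw [e, Aexp_mul, Aexp_mul, Aexp_γ_zpow, Aexp_γ_zpow, Aexp_σ]
  ring

lemma Fcf_e (i : ℕ) : Fcf (e i) (i : ℤ) = 1 := by
  rw [e, Fcf_mul, Fcf_mul, Fcf_γ_zpow, Fcf_γ_zpow, Aexp_γ_zpow, Fcf_σ]
  simp only [Finsupp.coe_zero, Pi.zero_apply, zero_add, add_zero, neg_add_cancel,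
    Finsupp.single_apply, eq_self_iff_true, if_true]

/-- In `ℤ ≀ ℤ`, the element `e i = γ^i σ γ^{-i}` has word length `2 i + 1` with
respect to the generating set `{γ, γ⁻¹, σ, σ⁻¹}`. -/
theorem wordLength_e (i : ℕ) (hi : 1 ≤ i) :
    wordLength ({γ, γ⁻¹, σ, σ⁻¹} : Set ZwrZ) (e i) = 2 * i + 1 := by
  have hS : ∀ x ∈ (List.replicate i γ ++ σ :: List.replicate i γ⁻¹),
      x ∈ ({γ, γ⁻¹, σ, σ⁻¹} : Set ZwrZ) := by
    intro x hx
    simp only [List.mem_append, List.mem_cons, List.mem_replicate] at hx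
    rcases hx with ⟨-, rfl⟩ | rfl | ⟨-, rfl⟩ <;> simp [Set.mem_insert_iff]
  have hlen : (List.replicate i γ ++ σ :: List.replicate i γ⁻¹).length = 2 * i + 1 := by
    simp; omega
  have hprod : (List.replicate i γ ++ σ :: List.replicate i γ⁻¹).prod = e i := by
    rw [List.prod_append, List.prod_cons, List.prod_replicate, List.prod_replicate, e]
    rw [zpow_natCast, zpow_neg, zpow_natCast, ← inv_pow, mul_assoc]
  have hmem : 2 * i + 1 ∈ {n | ∃ l : List ZwrZ,
      (∀ x ∈ l, x ∈ ({γ, γ⁻¹, σ, σ⁻¹} : Set ZwrZ)) ∧ l.length = n ∧ l.prod = e i} :=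
    ⟨_, hS, hlen, hprod⟩
  refine le_antisymm (Nat.sInf_le hmem) (le_csInf ⟨_, hmem⟩ ?_)
  rintro n ⟨l, hl, rfl, hprodl⟩
  have hF : Fcf l.prod (i : ℤ) ≠ 0 := by rw [hprodl, Fcf_e]; norm_num
  have := key_bound l hl (i : ℤ) hF
  rw [hprodl, Aexp_e, sub_zero] at this
  omega

end
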